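/- Let I ⊆ Π and set 𝔞 = {v ∈ V : ⟨α,v⟩ = 0 for all α ∈ I}, N(𝔞) = {w ∈ W : w(𝔞) = 𝔞}, and C(𝔞,I) = {w ∈ N(𝔞) : w(Δ_I⁺) = Δ_I⁺}. Then W_I is a normal subgroup of N(𝔞), C(𝔞,I) ∩ W_I = {1}, and N(𝔞) = C(𝔞,I) · W_I; that is, N(𝔞) is the internal semidirect product C(𝔞,I) ⋉ W_I. -/

import Mathlib

open scoped RealInnerProductSpace

/-- A finite reduced crystallographic root system spanning a real inner
product space `V` (whose inner product is automatically invariant under the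
Weyl group, since the reflections are isometries), together with a fixed
system of positive roots and the corresponding simple roots. -/
structure RootSystemData (V : Type)
    [NormedAddCommGroup V] [InnerProductSpace ℝ V] : Type where
  roots : Finset V
  pos : Finset V
  simples : Finset V
  zero_not_mem : (0 : V) ∉ roots
  span_roots : Submodule.span ℝ (roots : Set V) = ⊤
  crystallographic : ∀ α ∈ roots, ∀ β ∈ roots,
    ∃ n : ℤ, 2 * ⟪α, β⟫ = (n : ℝ) * ⟪β, β⟫
  reduced : ∀ α ∈ roots, ∀ t : ℝ, t • α ∈ roots → t = 1 ∨ t = -1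
  reflect_mem : ∀ α ∈ roots, ∀ β ∈ roots,
    β - (2 * ⟪β, α⟫ / ⟪α, α⟫) • α ∈ roots
  pos_subset : pos ⊆ roots
  mem_pos_or_neg_mem_pos : ∀ α ∈ roots, α ∈ pos ∨ -α ∈ pos
  neg_not_pos : ∀ α ∈ pos, -α ∉ pos
  simples_subset : simples ⊆ pos
  simples_linearIndependent : LinearIndependent ℝ (fun α : simples => (α : V))
  pos_sum_of_simples : ∀ β ∈ pos, ∃ c : V →₀ ℕ,
    (c.support : Set V) ⊆ (simples : Set V) ∧ β = c.sum fun α n => (n : ℝ) • α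

namespace RootSystemData

variable {V : Type} [NormedAddCommGroup V] [InnerProductSpace ℝ V]
variable (R : RootSystemData V)

/-- `β₁ > β₂` : the difference `β₁ - β₂` is a nonempty sum of positive roots. -/
def Gt (x y : V) : Prop :=
  ∃ m : Multiset V, m ≠ 0 ∧ (∀ z ∈ m, z ∈ R.pos) ∧ x - y = m.sum

/-- `β₁ ≥ β₂` : either `β₁ > β₂` or `β₁ = β₂`. -/
def Ge (x y : V) : Prop := R.Gt x y ∨ x = y

/-- An antichain: a set of pairwise incomparable positive roots. -/
def IsRootAntichain (A : Set V) : Prop :=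
  A ⊆ (R.pos : Set V) ∧ ∀ x ∈ A, ∀ y ∈ A, x ≠ y → ¬ R.Ge x y ∧ ¬ R.Ge y x

/-- An orthogonal antichain: an antichain of pairwise orthogonal positive roots. -/
def IsOrthAntichain (A : Set V) : Prop :=
  R.IsRootAntichain A ∧ ∀ x ∈ A, ∀ y ∈ A, x ≠ y → ⟪x, y⟫ = 0

/-- The complement, inside the open dominant Weyl chamber, of the hyperplane
arrangement `⟨β,·⟩ = 1`, `β ∈ Δ⁺`. -/
def chamberSet : Set V :=
  {χ | (∀ α ∈ R.simples, 0 < ⟪α, χ⟫) ∧ ∀ β ∈ R.pos, ⟪β, χ⟫ ≠ 1}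

/-- A region: a connected component of `chamberSet`. -/
def IsRegion (F : Set V) : Prop :=
  ∃ χ ∈ R.chamberSet, F = connectedComponentIn R.chamberSet χ

/-- The positive roots `β` with `⟨β,·⟩ < 1` on `F`. -/
def ltOne (F : Set V) : Set V := {β | β ∈ R.pos ∧ ∀ χ ∈ F, ⟪β, χ⟫ < 1}

/-- The positive roots `β` with `⟨β,·⟩ > 1` on `F`. -/
def gtOne (F : Set V) : Set V := {β | β ∈ R.pos ∧ ∀ χ ∈ F, 1 < ⟪β, χ⟫}

/-- `δ(F)`: the maximal roots among the positive roots `β` with `⟨β,·⟩ < 1` on `F`. -/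
def deltaLow (F : Set V) : Set V :=
  {β | β ∈ R.ltOne F ∧ ∀ β' ∈ R.ltOne F, ¬ R.Gt β' β}

/-- `δ'(F)`: the minimal roots among the positive roots `β` with `⟨β,·⟩ > 1` on `F`. -/
def deltaHigh (F : Set V) : Set V :=
  {β | β ∈ R.gtOne F ∧ ∀ β' ∈ R.gtOne F, ¬ R.Gt β β'}

/-- Simply laced: all roots have the same length, normalized so `⟨β,β⟩ = 2`. -/
def SimplyLaced : Prop := ∀ β ∈ R.roots, ⟪β, β⟫ = 2

/-- Irreducibility: the set of roots admits no nontrivial partition into two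
mutually orthogonal parts. -/
def IsIrreducible : Prop :=
  ∀ S : Set V, S ⊆ (R.roots : Set V) →
    (∀ a ∈ S, ∀ b ∈ (R.roots : Set V) \ S, ⟪a, b⟫ = 0) →
    S = ∅ ∨ S = (R.roots : Set V)

/-- The height of a positive root: the sum of its (unique) coordinates in the
simple roots. -/
noncomputable def height (β : V) : ℕ :=
  letI := Classical.propDecidable (∃ c : V →₀ ℕ, (c.support : Set V) ⊆ (R.simples : Set V) ∧
      β = c.sum (fun α n => (n : ℝ) • α))
  if h : ∃ c : V →₀ ℕ, (c.support : Set V) ⊆ (R.simples : Set V) ∧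
      β = c.sum (fun α n => (n : ℝ) • α)
  then (Classical.choose h).sum fun _ n => n
  else 0

/-- The root system has the Cartan–Killing type given by the (simply laced)
Cartan matrix `A`: there is an indexing of the simple roots under which, in the
normalization `⟨β,β⟩ = 2`, the inner products of simple roots are the entries
of `A`. -/
def HasType {n : ℕ} (A : Matrix (Fin n) (Fin n) ℤ) : Prop :=
  ∃ e : Fin n ≃ {x // x ∈ R.simples},
    ∀ i j, ⟪((e i : V)), ((e j : V))⟫ = (A i j : ℝ)

/-- The reflections `s_β`, `β ∈ S`, as linear isometries of `V`. -/
def reflectionsOn (S : Set V) : Set (V ≃ₗᵢ[ℝ] V) :=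
  {g | ∃ β ∈ S, ∀ v, g v = v - (2 * ⟪v, β⟫ / ⟪β, β⟫) • β}

/-- The Weyl group `W`, generated by the reflections in all roots. -/
def weyl : Subgroup (V ≃ₗᵢ[ℝ] V) :=
  Subgroup.closure (reflectionsOn (R.roots : Set V))

/-- `Δ_S = Δ ∩ span_ℝ(S)`. -/
def rootsIn (S : Set V) : Set V :=
  {β | β ∈ R.roots ∧ β ∈ Submodule.span ℝ S}

/-- `Δ_S⁺ = Δ⁺ ∩ span_ℝ(S)`. -/
def posIn (S : Set V) : Set V :=
  {β | β ∈ R.pos ∧ β ∈ Submodule.span ℝ S}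

/-- The inversion set `N(w) = {β ∈ Δ⁺ : w(β) ∈ -Δ⁺}`. -/
def inversionSet (w : V ≃ₗᵢ[ℝ] V) : Set V :=
  {β | β ∈ R.pos ∧ -(w β) ∈ R.pos}

end RootSystemData

/-- The subgroup of isometries generated by the reflections `s_β`, `β ∈ S`. -/
def reflectionSubgroup {V : Type} [NormedAddCommGroup V] [InnerProductSpace ℝ V]
    (S : Set V) : Subgroup (V ≃ₗᵢ[ℝ] V) :=
  Subgroup.closure (RootSystemData.reflectionsOn S)

/-- `𝔞 = {v ∈ V : ⟨α,v⟩ = 0 for all α ∈ I}`. -/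
def perpSpace {V : Type} [NormedAddCommGroup V] [InnerProductSpace ℝ V]
    (I : Finset V) : Set V := {v | ∀ α ∈ I, ⟪α, v⟫ = 0}

/-- `N(𝔞) = {w ∈ W : w(𝔞) = 𝔞}`. -/
def normSet {V : Type} [NormedAddCommGroup V] [InnerProductSpace ℝ V]
    (R : RootSystemData V) (I : Finset V) : Set (V ≃ₗᵢ[ℝ] V) :=
  {w | w ∈ R.weyl ∧ (⇑w) '' perpSpace I = perpSpace I}

/-- `C(𝔞,I) = {w ∈ N(𝔞) : w(Δ_I⁺) = Δ_I⁺}`. -/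
def compSet {V : Type} [NormedAddCommGroup V] [InnerProductSpace ℝ V]
    (R : RootSystemData V) (I : Finset V) : Set (V ≃ₗᵢ[ℝ] V) :=
  {w | w ∈ normSet R I ∧ (⇑w) '' R.posIn ↑I = R.posIn ↑I}

set_option linter.unusedSectionVars false
set_option maxHeartbeats 1000000

section ReflAux
variable {V : Type} [NormedAddCommGroup V] [InnerProductSpace ℝ V] [FiniteDimensional ℝ V]

noncomputable def rf (β : V) : V ≃ₗᵢ[ℝ] V := Submodule.reflection ((ℝ ∙ β)ᗮ)

lemma rf_apply (β v : V) : rf β v = v - (2 * ⟪v, β⟫ / ⟪β, β⟫) • β := by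
  rcases eq_or_ne β 0 with hβ | hβ
  · subst hβ
    have h : v ∈ ((ℝ ∙ (0:V))ᗮ) := by
      simp [Submodule.span_zero_singleton]
    have h2 : rf (0:V) v = v := Submodule.reflection_mem_subspace_eq_self h
    rw [h2]; simp
  · have hb : ⟪β, β⟫ ≠ 0 := inner_self_ne_zero.2 hβ
    set c : ℝ := ⟪v, β⟫ / ⟪β, β⟫ with hc
    have hq : v - c • β ∈ ((ℝ ∙ β)ᗮ) := by
      rw [Submodule.mem_orthogonal]
      intro u hu
      rw [Submodule.mem_span_singleton] at hu
      obtain ⟨a, rfl⟩ := hu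
      have h0 : ⟪β, v - c • β⟫ = 0 := by
        rw [inner_sub_right, real_inner_smul_right, hc, real_inner_comm v β,
          div_mul_cancel₀ _ hb, sub_self]
      rw [real_inner_smul_left, h0, mul_zero]
    have hp : c • β ∈ ((ℝ ∙ β)ᗮ)ᗮ :=
      Submodule.le_orthogonal_orthogonal (ℝ ∙ β) (Submodule.mem_span_singleton.2 ⟨c, rfl⟩)
    have hv : v = (v - c • β) + c • β := by abel
    calc rf β v = rf β (v - c • β) + rf β (c • β) := by
          rw [← LinearIsometryEquiv.map_add]; exact congrArg _ hv
    _ = (v - c • β) + -(c • β) := by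
        rw [show rf β (v - c • β) = v - c • β from Submodule.reflection_mem_subspace_eq_self hq,
          show rf β (c • β) = -(c • β) from
            Submodule.reflection_mem_subspace_orthogonalComplement_eq_neg hp]
    _ = v - (2 * ⟪v, β⟫ / ⟪β, β⟫) • β := by rw [hc]; module

lemma rf_fix {β v : V} (h : ⟪β, v⟫ = 0) : rf β v = v := by
  rw [rf_apply, real_inner_comm β v] at *
  rw [h]
  simp

lemma rf_self (β : V) (hβ : β ≠ 0) : rf β β = -β := by
  have h : ⟪β, β⟫ ≠ 0 := inner_self_ne_zero.2 hβ
  rw [rf_apply]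
  rw [mul_div_assoc, div_self h]
  module

lemma rf_rf (β v : V) : rf β (rf β v) = v := Submodule.reflection_reflection _ _

lemma rf_inv (β : V) : (rf β)⁻¹ = rf β := by
  ext v
  have h1 : (rf β)⁻¹ v = (Submodule.reflection ((ℝ ∙ β)ᗮ)).symm v := rfl
  rw [h1, Submodule.reflection_symm]
  rfl

lemma rf_sq (β : V) : rf β * rf β = 1 := by
  ext v
  exact rf_rf β v

lemma rf_neg (β : V) : rf (-β) = rf β := by
  ext v
  rw [rf_apply, rf_apply]
  simp only [inner_neg_right, inner_neg_left, neg_neg]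
  module

lemma rf_conj (w : V ≃ₗᵢ[ℝ] V) (β : V) : w * rf β * w⁻¹ = rf (w β) := by
  ext v
  have h1 : (w * rf β * w⁻¹) v = w (rf β (w⁻¹ v)) := rfl
  rw [h1, rf_apply, rf_apply]
  have h2 : ⟪(w⁻¹ : V ≃ₗᵢ[ℝ] V) v, β⟫ = ⟪v, w β⟫ := by
    have h := w.inner_map_map ((w⁻¹ : V ≃ₗᵢ[ℝ] V) v) β
    rw [← h]
    congr 1
    exact w.apply_symm_apply v
  have h3 : ⟪β, β⟫ = ⟪w β, w β⟫ := (w.inner_map_map β β).symm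
  rw [map_sub, map_smul, h2, ← h3]
  congr 1
  exact w.apply_symm_apply v
end ReflAux

section RootAux
variable {V : Type} [NormedAddCommGroup V] [InnerProductSpace ℝ V] [FiniteDimensional ℝ V]
variable (R : RootSystemData V)

lemma root_ne_zero {β : V} (h : β ∈ R.roots) : β ≠ 0 :=
  fun e => R.zero_not_mem (e ▸ h)

lemma simple_mem_roots {β : V} (h : β ∈ R.simples) : β ∈ R.roots :=
  R.pos_subset (R.simples_subset h)

lemma rf_mem_reflectionsOn {S : Set V} {β : V} (h : β ∈ S) :
    rf β ∈ RootSystemData.reflectionsOn S :=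
  ⟨β, h, fun v => rf_apply β v⟩

lemma reflectionsOn_eq_rf {S : Set V} {g : V ≃ₗᵢ[ℝ] V}
    (h : g ∈ RootSystemData.reflectionsOn S) : ∃ β ∈ S, g = rf β := by
  obtain ⟨β, hβ, hg⟩ := h
  exact ⟨β, hβ, by ext v; rw [hg v, rf_apply]⟩

lemma rf_mem_weyl {β : V} (h : β ∈ R.roots) : rf β ∈ R.weyl :=
  Subgroup.subset_closure (rf_mem_reflectionsOn h)

lemma rf_root {β γ : V} (hβ : β ∈ R.roots) (hγ : γ ∈ R.roots) : rf β γ ∈ R.roots := by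
  rw [rf_apply]; exact R.reflect_mem β hβ γ hγ

lemma weyl_root_pair {w : V ≃ₗᵢ[ℝ] V} (hw : w ∈ R.weyl) :
    ∀ γ ∈ R.roots, w γ ∈ R.roots ∧ w⁻¹ γ ∈ R.roots := by
  induction hw using Subgroup.closure_induction with
  | mem x hx =>
    obtain ⟨β, hβ, rfl⟩ := reflectionsOn_eq_rf hx
    intro γ hγ
    refine ⟨rf_root R hβ hγ, ?_⟩
    rw [rf_inv]; exact rf_root R hβ hγ
  | one => intro γ hγ; exact ⟨hγ, hγ⟩
  | mul x y hx hy px py =>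
    intro γ hγ
    have h1 : (x * y) γ = x (y γ) := rfl
    have h2 : (x * y)⁻¹ γ = y⁻¹ (x⁻¹ γ) := by rw [mul_inv_rev]; rfl
    rw [h1, h2]
    exact ⟨(px (y γ) ((py γ hγ).1)).1, (py _ ((px γ hγ).2)).2⟩
  | inv x hx px =>
    intro γ hγ
    rw [inv_inv]
    exact ⟨(px γ hγ).2, (px γ hγ).1⟩

lemma weyl_root {w : V ≃ₗᵢ[ℝ] V} (hw : w ∈ R.weyl) {γ : V} (hγ : γ ∈ R.roots) :
    w γ ∈ R.roots := (weyl_root_pair R hw γ hγ).1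

lemma coeff_unique {f g : V → ℝ}
    (h : ∑ α ∈ R.simples, f α • α = ∑ α ∈ R.simples, g α • α) :
    ∀ α ∈ R.simples, f α = g α := by
  have hli := linearIndependent_iff'.1 R.simples_linearIndependent
  have h0 : ∑ α ∈ R.simples, (f α - g α) • α = 0 := by
    simp only [sub_smul, Finset.sum_sub_distrib, h, sub_self]
  have h1 : ∑ i : {x // x ∈ R.simples}, (f i.1 - g i.1) • (i.1 : V) = 0 := by
    rw [Finset.sum_coe_sort R.simples (fun a => (f a - g a) • a)]
    exact h0
  intro α hα
  have h2 := hli Finset.univ (fun i => f i.1 - g i.1) h1 ⟨α, hα⟩ (Finset.mem_univ _)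
  exact sub_eq_zero.1 h2

lemma pos_rep {β : V} (h : β ∈ R.pos) :
    ∃ f : V → ℕ, β = ∑ α ∈ R.simples, (f α : ℝ) • α := by
  obtain ⟨c, hsupp, hsum⟩ := R.pos_sum_of_simples β h
  refine ⟨c, ?_⟩
  rw [hsum, Finsupp.sum]
  refine Finset.sum_subset (Finset.coe_subset.1 hsupp) ?_
  intro x hx hnx
  rw [Finsupp.notMem_support_iff.1 hnx]
  simp

noncomputable def rep (R : RootSystemData V) (β : V) : V → ℕ :=
  letI := Classical.propDecidable (∃ f : V → ℕ, β = ∑ α ∈ R.simples, (f α : ℝ) • α)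
  if h : ∃ f : V → ℕ, β = ∑ α ∈ R.simples, (f α : ℝ) • α then Classical.choose h
  else fun _ => 0

lemma rep_spec {β : V} (h : β ∈ R.pos) :
    β = ∑ α ∈ R.simples, (rep R β α : ℝ) • α := by
  have he := pos_rep R h
  rw [rep]
  rw [dif_pos he]
  exact Classical.choose_spec he

lemma rep_supp {I : Finset V} (hI : I ⊆ R.simples) {β : V} (hβ : β ∈ R.pos)
    (hsp : β ∈ Submodule.span ℝ (I : Set V)) :
    ∀ α ∈ R.simples, α ∉ I → rep R β α = 0 := by
  classical
  obtain ⟨g, -, hg⟩ := Submodule.mem_span_finset.1 hsp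
  have h1 : ∑ α ∈ R.simples, (if α ∈ I then g α else 0) • α = ∑ α ∈ I, g α • α := by
    rw [← Finset.sum_subset hI (fun x _ hx => by rw [if_neg hx, zero_smul])]
    exact Finset.sum_congr rfl (fun x hx => by rw [if_pos hx])
  have h2 := coeff_unique R (f := fun x => if x ∈ I then g x else 0)
    (g := fun x => (rep R β x : ℝ)) (by rw [h1, hg]; exact rep_spec R hβ)
  intro α hα hni
  have h3 := h2 α hα
  simp only [if_neg hni] at h3
  exact_mod_cast h3.symm

lemma root_pos_of_nonneg {β : V} (hβ : β ∈ R.roots) {f : V → ℝ}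
    (hf : ∀ α, 0 ≤ f α) (h : β = ∑ α ∈ R.simples, f α • α) : β ∈ R.pos := by
  rcases R.mem_pos_or_neg_mem_pos β hβ with h1 | h1
  · exact h1
  · exfalso
    have h2 := rep_spec R h1
    have h3 : ∑ α ∈ R.simples, (f α + (rep R (-β) α : ℝ)) • α
        = ∑ α ∈ R.simples, (0:ℝ) • α := by
      simp only [add_smul, Finset.sum_add_distrib, ← h, ← h2]
      simp
    have h4 := coeff_unique R h3
    have h5 : ∀ α ∈ R.simples, f α = 0 := by
      intro α hα
      have h6 := h4 α hα
      have hc : (0:ℝ) ≤ (rep R (-β) α : ℝ) := Nat.cast_nonneg _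
      have := hf α
      linarith
    apply root_ne_zero R hβ
    rw [h]
    exact Finset.sum_eq_zero (fun α hα => by rw [h5 α hα, zero_smul])

lemma exists_other_coord {β α : V} (hβ : β ∈ R.pos) (hα : α ∈ R.simples) (hne : β ≠ α) :
    ∃ γ ∈ R.simples, γ ≠ α ∧ rep R β γ ≠ 0 := by
  by_contra hc
  push_neg at hc
  have h1 : β = (rep R β α : ℝ) • α := by
    conv_lhs => rw [rep_spec R hβ]
    rw [Finset.sum_eq_single α]
    · intro b hb hba; rw [hc b hb hba]; simp
    · intro hα'; exact absurd hα hα'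
  have hroot : ((rep R β α : ℝ)) • α ∈ R.roots := h1 ▸ R.pos_subset hβ
  rcases R.reduced α (simple_mem_roots R hα) _ hroot with h2 | h2
  · apply hne; rw [h1, h2, one_smul]
  · have h3 : (0:ℝ) ≤ (rep R β α : ℝ) := Nat.cast_nonneg _
    rw [h2] at h3; linarith

lemma rf_simple_pos {α β : V} (hα : α ∈ R.simples) (hβ : β ∈ R.pos) (hne : β ≠ α) :
    rf α β ∈ R.pos := by
  classical
  have hαr := simple_mem_roots R hα
  have hβr := R.pos_subset hβ
  have hr : rf α β ∈ R.roots := rf_root R hαr hβr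
  rcases R.mem_pos_or_neg_mem_pos _ hr with h1 | h1
  · exact h1
  · exfalso
    obtain ⟨γ, hγ, hγα, hγ0⟩ := exists_other_coord R hβ hα hne
    set c : ℝ := 2 * ⟪β, α⟫ / ⟪α, α⟫ with hc
    have hrf : rf α β = β - c • α := rf_apply α β
    have h2 := rep_spec R h1
    have hite : ∑ γ' ∈ R.simples, (if γ' = α then c else 0) • γ' = c • α := by
      rw [Finset.sum_eq_single α]
      · rw [if_pos rfl]
      · intro b hb hba; rw [if_neg hba, zero_smul]
      · intro h'; exact absurd hα h'
    have hzero : ∑ γ' ∈ R.simples,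
        ((rep R β γ' : ℝ) - (if γ' = α then c else 0) + (rep R (-(rf α β)) γ' : ℝ)) • γ'
        = ∑ γ' ∈ R.simples, (0:ℝ) • γ' := by
      simp only [add_smul, sub_smul, Finset.sum_add_distrib, Finset.sum_sub_distrib]
      rw [← rep_spec R hβ, hite, ← h2, hrf]
      simp
    have h4 := coeff_unique R hzero γ hγ
    rw [if_neg hγα] at h4
    have h6 : (0:ℝ) ≤ (rep R (-(rf α β)) γ : ℝ) := Nat.cast_nonneg _
    have h7 : (0:ℝ) ≤ (rep R β γ : ℝ) := Nat.cast_nonneg _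
    have h5 : (rep R β γ : ℝ) = 0 := by linarith
    exact hγ0 (by exact_mod_cast h5)

lemma rf_simple_pos_ne {α β : V} (hα : α ∈ R.simples) (hβ : β ∈ R.pos) (hne : β ≠ α) :
    rf α β ≠ α := by
  intro h
  have h1 := rf_rf α β
  rw [h, rf_self α (root_ne_zero R (simple_mem_roots R hα))] at h1
  exact R.neg_not_pos α (R.simples_subset hα) (by rw [h1]; exact hβ)

noncomputable def ht (R : RootSystemData V) (β : V) : ℕ := ∑ α ∈ R.simples, rep R β α

lemma perp_eq (I : Finset V) :
    perpSpace I = ((Submodule.span ℝ (I : Set V))ᗮ : Set V) := by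
  ext v
  constructor
  · intro hv
    rw [SetLike.mem_coe, Submodule.mem_orthogonal]
    intro u hu
    induction hu using Submodule.span_induction with
    | mem x hx => exact hv x (Finset.mem_coe.1 hx)
    | zero => simp
    | add x y hx hy ihx ihy => rw [inner_add_left, ihx, ihy, add_zero]
    | smul a x hx ihx => rw [real_inner_smul_left, ihx, mul_zero]
  · intro hv α hα
    exact (Submodule.mem_orthogonal _ v).1 hv α (Submodule.subset_span (Finset.mem_coe.2 hα))

lemma norm_maps_span {I : Finset V} {w : V ≃ₗᵢ[ℝ] V}
    (hw : (⇑w) '' perpSpace I = perpSpace I) {v : V}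
    (hv : v ∈ Submodule.span ℝ (I : Set V)) : w v ∈ Submodule.span ℝ (I : Set V) := by
  set K := Submodule.span ℝ (I : Set V) with hKdef
  have hK : Kᗮᗮ = K := Submodule.orthogonal_orthogonal K
  rw [← hK, Submodule.mem_orthogonal]
  intro u hu
  have hu' : u ∈ (⇑w) '' perpSpace I := by
    rw [hw, perp_eq]
    exact hu
  obtain ⟨z, hz, rfl⟩ := hu'
  have hz' : z ∈ Kᗮ := by rw [perp_eq] at hz; exact hz
  rw [w.inner_map_map, real_inner_comm]
  exact (Submodule.mem_orthogonal _ _).1 hz' v hv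

def normSubgroup (R : RootSystemData V) (I : Finset V) : Subgroup (V ≃ₗᵢ[ℝ] V) where
  carrier := normSet R I
  one_mem' := by
    refine ⟨R.weyl.one_mem, ?_⟩
    have h : ⇑(1 : V ≃ₗᵢ[ℝ] V) = id := rfl
    rw [h, Set.image_id]
  mul_mem' := by
    rintro a b ⟨ha1, ha2⟩ ⟨hb1, hb2⟩
    refine ⟨R.weyl.mul_mem ha1 hb1, ?_⟩
    have h : (⇑(a * b)) = ⇑a ∘ ⇑b := rfl
    rw [h, Set.image_comp, hb2, ha2]
  inv_mem' := by
    rintro a ⟨ha1, ha2⟩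
    refine ⟨R.weyl.inv_mem ha1, ?_⟩
    conv_lhs => rw [← ha2]
    rw [← Set.image_comp]
    have h : (⇑a⁻¹ ∘ ⇑a) = id := by funext x; exact a.symm_apply_apply x
    rw [h, Set.image_id]

lemma reflectionSubgroup_le_norm {I : Finset V} (hI : I ⊆ R.simples) :
    reflectionSubgroup (I : Set V) ≤ normSubgroup R I := by
  refine (Subgroup.closure_le _).2 ?_
  intro g hg
  obtain ⟨β, hβ, rfl⟩ := reflectionsOn_eq_rf hg
  have hβI : β ∈ I := Finset.mem_coe.1 hβ
  refine ⟨rf_mem_weyl R (simple_mem_roots R (hI hβI)), ?_⟩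
  have hfix : ∀ v ∈ perpSpace I, rf β v = id v := fun v hv => rf_fix (hv β hβI)
  rw [Set.image_congr hfix, Set.image_id]

lemma rf_mem_parabolic_aux {I : Finset V} (hI : I ⊆ R.simples) :
    ∀ n : ℕ, ∀ β : V, β ∈ R.pos → β ∈ Submodule.span ℝ (I : Set V) → ht R β ≤ n →
      rf β ∈ reflectionSubgroup (I : Set V) := by
  intro n
  induction n with
  | zero =>
    intro β hβ hsp hht
    exfalso
    have h0 : ∀ α ∈ R.simples, rep R β α = 0 :=
      Finset.sum_eq_zero_iff.1 (Nat.le_zero.1 hht)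
    apply root_ne_zero R (R.pos_subset hβ)
    rw [rep_spec R hβ]
    exact Finset.sum_eq_zero fun α hα => by rw [h0 α hα]; simp
  | succ n ih =>
    classical
    intro β hβ hsp hht
    have hβr := R.pos_subset hβ
    have hip : (0:ℝ) < ⟪β, β⟫ :=
      lt_of_le_of_ne real_inner_self_nonneg (Ne.symm (inner_self_ne_zero.2 (root_ne_zero R hβr)))
    have hrw := rep_spec R hβ
    have hsum : ∀ x : V, ⟪x, β⟫ = ∑ γ ∈ R.simples, (rep R β γ : ℝ) * ⟪x, γ⟫ := by
      intro x
      conv_lhs => rw [hrw]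
      rw [inner_sum]
      exact Finset.sum_congr rfl fun γ _ => real_inner_smul_right x γ _
  -- find suitable γ
    have hex : ∃ γ ∈ R.simples, rep R β γ ≠ 0 ∧ 0 < ⟪β, γ⟫ := by
      by_contra hcon
      push_neg at hcon
      have hle : ∀ γ ∈ R.simples, (rep R β γ : ℝ) * ⟪β, γ⟫ ≤ 0 := by
        intro γ hγ
        rcases eq_or_ne (rep R β γ) 0 with h | h
        · rw [h]; simp
        · have h2 := hcon γ hγ h
          exact mul_nonpos_of_nonneg_of_nonpos (Nat.cast_nonneg _) h2
      have h3 := Finset.sum_nonpos hle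
      rw [← hsum β] at h3
      linarith
    obtain ⟨γ, hγs, hγ0, hγpos⟩ := hex
    have hγI : γ ∈ I := by
      by_contra hn
      exact hγ0 (rep_supp R hI hβ hsp γ hγs hn)
    rcases eq_or_ne β γ with rfl | hne
    · exact Subgroup.subset_closure (rf_mem_reflectionsOn (Finset.mem_coe.2 hγI))
    · set β' := rf γ β with hβ'def
      have hβ'pos : β' ∈ R.pos := rf_simple_pos R hγs hβ hne
      have hβ'sp : β' ∈ Submodule.span ℝ (I : Set V) := by
        rw [hβ'def, rf_apply]
        exact Submodule.sub_mem _ hsp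
          (Submodule.smul_mem _ _ (Submodule.subset_span (Finset.mem_coe.2 hγI)))
      have hγr := simple_mem_roots R hγs
      obtain ⟨m, hm⟩ := R.crystallographic β hβr γ hγr
      have hγγ : (0:ℝ) < ⟪γ, γ⟫ :=
        lt_of_le_of_ne real_inner_self_nonneg (Ne.symm (inner_self_ne_zero.2 (root_ne_zero R hγr)))
      have hcm : 2 * ⟪β, γ⟫ / ⟪γ, γ⟫ = (m : ℝ) := by
        rw [hm]
        field_simp
      have hm1 : 1 ≤ m := by
        have h2 : (0:ℝ) < (m:ℝ) := by
          rw [← hcm]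
          positivity
        have h3 : 0 < m := by exact_mod_cast h2
        omega
      have hite2 : ∑ α ∈ R.simples, (if α = γ then (m:ℝ) else 0) • α = (m:ℝ) • γ := by
        rw [Finset.sum_eq_single γ]
        · rw [if_pos rfl]
        · intro b hb hbγ; rw [if_neg hbγ, zero_smul]
        · intro h; exact absurd hγs h
      have hβ'eq : β' = ∑ α ∈ R.simples,
          ((rep R β α : ℝ) - (if α = γ then (m:ℝ) else 0)) • α := by
        rw [hβ'def, rf_apply, hcm]
        simp only [sub_smul, Finset.sum_sub_distrib]
        rw [← hrw, hite2]
      have hcoeff := coeff_unique R (f := fun α => (rep R β' α : ℝ))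
        (g := fun α => (rep R β α : ℝ) - (if α = γ then (m:ℝ) else 0))
        (by rw [← rep_spec R hβ'pos, ← hβ'eq])
      have hm1' : (1:ℝ) ≤ (m:ℝ) := by exact_mod_cast hm1
      have hlt : ht R β' < ht R β := by
        refine Finset.sum_lt_sum ?_ ⟨γ, hγs, ?_⟩
        · intro α hα
          rcases eq_or_ne α γ with rfl | hαγ
          · have h8 := hcoeff α hα
            simp only [if_pos] at h8
            have h9 : (rep R β' α : ℝ) ≤ (rep R β α : ℝ) := by linarith
            exact_mod_cast h9
          · have h8 := hcoeff α hα
            simp only [if_neg hαγ, sub_zero] at h8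
            exact le_of_eq (by exact_mod_cast h8)
        · have h8 := hcoeff γ hγs
          simp only [if_pos] at h8
          have h9 : (rep R β' γ : ℝ) < (rep R β γ : ℝ) := by linarith
          exact_mod_cast h9
      have hle : ht R β' ≤ n := by omega
      have hps := ih β' hβ'pos hβ'sp hle
      have hconj : rf β = rf γ * rf β' * rf γ := by
        have h1 : rf γ β' = β := by rw [hβ'def, rf_rf]
        have h2 := rf_conj (rf γ) β'
        rw [h1] at h2
        rw [← h2, rf_inv]
      rw [hconj]
      have hγmem : rf γ ∈ reflectionSubgroup (I:Set V) :=
        Subgroup.subset_closure (rf_mem_reflectionsOn (Finset.mem_coe.2 hγI))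
      exact Subgroup.mul_mem _ (Subgroup.mul_mem _ hγmem hps) hγmem

noncomputable def PL (L : List V) : V ≃ₗᵢ[ℝ] V := (L.map rf).prod

lemma PL_cons (α : V) (L : List V) : PL (α :: L) = rf α * PL L := by
  simp [PL]

lemma PL_single (α : V) : PL [α] = rf α := by simp [PL]

lemma PL_append (L₁ L₂ : List V) : PL (L₁ ++ L₂) = PL L₁ * PL L₂ := by
  simp [PL]

lemma PL_inv (L : List V) : (PL L)⁻¹ = PL L.reverse := by
  induction L with
  | nil => simp [PL]
  | cons α L ih =>
    rw [PL_cons, mul_inv_rev, ih, rf_inv, List.reverse_cons, PL_append, PL_single]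

lemma mem_reflectionSubgroup_list {I : Finset V} {w : V ≃ₗᵢ[ℝ] V}
    (hw : w ∈ reflectionSubgroup (I : Set V)) :
    ∃ L : List V, (∀ α ∈ L, α ∈ I) ∧ w = PL L := by
  induction hw using Subgroup.closure_induction with
  | mem x hx =>
    obtain ⟨β, hβ, rfl⟩ := reflectionsOn_eq_rf hx
    refine ⟨[β], ?_, (PL_single β).symm⟩
    intro α hα
    rw [List.mem_singleton] at hα
    subst hα
    exact Finset.mem_coe.1 hβ
  | one => exact ⟨[], by simp, rfl⟩
  | mul x y hx hy ihx ihy =>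
    obtain ⟨L₁, h1, rfl⟩ := ihx
    obtain ⟨L₂, h2, rfl⟩ := ihy
    refine ⟨L₁ ++ L₂, ?_, (PL_append L₁ L₂).symm⟩
    intro α hα
    rcases List.mem_append.1 hα with h | h
    exacts [h1 α h, h2 α h]
  | inv x hx ihx =>
    obtain ⟨L, h1, rfl⟩ := ihx
    exact ⟨L.reverse, fun α hα => h1 α (List.mem_reverse.1 hα), PL_inv L⟩

lemma deletion {I : Finset V} (hI : I ⊆ R.simples) :
    ∀ L : List V, (∀ γ ∈ L, γ ∈ I) → ∀ α ∈ I, PL L α ∉ R.pos →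
      ∃ L' : List V, (∀ γ ∈ L', γ ∈ I) ∧ L'.length + 1 = L.length ∧
        PL L * rf α = PL L' := by
  intro L
  induction L with
  | nil =>
    intro _ α hα hneg
    exact absurd (R.simples_subset (hI hα)) (by simpa [PL] using hneg)
  | cons γ L ih =>
    intro hmem α hα hneg
    have hγI : γ ∈ I := hmem γ List.mem_cons_self
    have hLmem : ∀ x ∈ L, x ∈ I := fun x hx => hmem x (List.mem_cons_of_mem _ hx)
    have happ : PL (γ :: L) α = rf γ (PL L α) := by rw [PL_cons]; rfl
    by_cases hp : PL L α ∈ R.pos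
    · have heq : PL L α = γ := by
        by_contra hne
        exact hneg (happ ▸ rf_simple_pos R (hI hγI) hp hne)
      have hconj := rf_conj (PL L) α
      rw [heq] at hconj
      refine ⟨L, hLmem, by simp, ?_⟩
      have hss : rf α * rf α = 1 := rf_sq α
      rw [PL_cons, ← hconj]
      rw [show PL L * rf α * (PL L)⁻¹ * PL L * rf α = PL L * (rf α * rf α) by group]
      rw [hss, mul_one]
    · obtain ⟨L', hL', hlen, heq⟩ := ih hLmem α hα hp
      refine ⟨γ :: L', ?_, ?_, ?_⟩
      · intro x hx
        rcases List.mem_cons.1 hx with rfl | h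
        exacts [hγI, hL' x h]
      · simp only [List.length_cons]
        omega
      · rw [PL_cons, mul_assoc, heq, PL_cons]

lemma no_inversion {I : Finset V} (hI : I ⊆ R.simples) :
    ∀ n : ℕ, ∀ L : List V, L.length ≤ n → (∀ γ ∈ L, γ ∈ I) →
      (∀ β ∈ R.pos, β ∈ Submodule.span ℝ (I : Set V) → PL L β ∈ R.pos) →
      PL L = 1 := by
  intro n
  induction n with
  | zero =>
    intro L hL _ _
    rw [List.length_eq_zero_iff.1 (Nat.le_zero.1 hL)]
    rfl
  | succ n ih =>
    intro L hL hmem hpos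
    rcases List.eq_nil_or_concat' L with rfl | ⟨L₁, α, rfl⟩
    · rfl
    · have hα : α ∈ I := hmem α (by simp)
      have hαpos : α ∈ R.pos := R.simples_subset (hI hα)
      have hαsp : α ∈ Submodule.span ℝ (I:Set V) :=
        Submodule.subset_span (Finset.mem_coe.2 hα)
      have hαne : α ≠ (0:V) := root_ne_zero R (R.pos_subset hαpos)
      have h2 : PL (L₁ ++ [α]) α = -(PL L₁ α) := by
        rw [PL_append, PL_single]
        have h1 : (PL L₁ * rf α) α = PL L₁ (rf α α) := rfl
        rw [h1, rf_self α hαne]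
        exact map_neg (PL L₁) α
      have h3 : PL (L₁ ++ [α]) α ∈ R.pos := hpos α hαpos hαsp
      have h4 : PL L₁ α ∉ R.pos := by
        intro hc
        exact R.neg_not_pos _ hc (h2 ▸ h3)
      have hL₁mem : ∀ γ ∈ L₁, γ ∈ I := fun γ hγ => hmem γ (by simp [hγ])
      obtain ⟨L', hL', hlen, heq⟩ := deletion R hI L₁ hL₁mem α hα h4
      have heq2 : PL (L₁ ++ [α]) = PL L' := by
        rw [PL_append, PL_single, heq]
      rw [heq2]
      refine ih L' ?_ hL' ?_
      · simp only [List.length_append, List.length_singleton] at hL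
        omega
      · intro β hβ hsp
        rw [← heq2]
        exact hpos β hβ hsp

open scoped Classical in
noncomputable def PIfin (R : RootSystemData V) (I : Finset V) : Finset V :=
  R.pos.filter (fun β => β ∈ Submodule.span ℝ (I : Set V))

open scoped Classical in
lemma mem_PIfin {I : Finset V} {β : V} :
    β ∈ PIfin R I ↔ β ∈ R.pos ∧ β ∈ Submodule.span ℝ (I : Set V) := by
  unfold PIfin
  rw [Finset.mem_filter]

open scoped Classical in
noncomputable def InvF (R : RootSystemData V) (I : Finset V) (v : V ≃ₗᵢ[ℝ] V) : Finset V :=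
  (PIfin R I).filter (fun β => v β ∉ R.pos)

open scoped Classical in
lemma mem_InvF {I : Finset V} {v : V ≃ₗᵢ[ℝ] V} {β : V} :
    β ∈ InvF R I v ↔ β ∈ PIfin R I ∧ v β ∉ R.pos := by
  unfold InvF
  rw [Finset.mem_filter]

lemma step_lemma {I : Finset V} (hI : I ⊆ R.simples) {v : V ≃ₗᵢ[ℝ] V}
    (hv : ∀ γ ∈ R.roots, v γ ∈ R.roots) {β : V} (hβ : β ∈ R.pos)
    (hsp : β ∈ Submodule.span ℝ (I : Set V)) (hneg : v β ∉ R.pos) :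
    ∃ α ∈ I, v α ∉ R.pos := by
  by_contra hc
  push_neg at hc
  apply hneg
  have hvβr : v β ∈ R.roots := hv β (R.pos_subset hβ)
  have hterm : ∀ α ∈ R.simples, (rep R β α : ℝ) • v α
      = ∑ γ ∈ R.simples, ((rep R β α : ℝ) * (rep R (v α) γ : ℝ)) • γ := by
    intro α hα
    rcases eq_or_ne (rep R β α) 0 with h | h
    · rw [h]
      simp
    · have hαI : α ∈ I := by
        by_contra hn
        exact h (rep_supp R hI hβ hsp α hα hn)
      have hvα : v α ∈ R.pos := hc α hαI
      conv_lhs => rw [rep_spec R hvα]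
      rw [Finset.smul_sum]
      exact Finset.sum_congr rfl fun γ _ => smul_smul _ _ _
  have hrepr1 : v β = ∑ α ∈ R.simples, (rep R β α : ℝ) • v α := by
    conv_lhs => rw [rep_spec R hβ]
    rw [map_sum]
    exact Finset.sum_congr rfl fun α _ => map_smul v _ _
  have hrepr : v β = ∑ γ ∈ R.simples,
      (∑ α ∈ R.simples, (rep R β α : ℝ) * (rep R (v α) γ : ℝ)) • γ := by
    rw [hrepr1, Finset.sum_congr rfl hterm, Finset.sum_comm]
    exact Finset.sum_congr rfl fun γ _ => (Finset.sum_smul).symm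
  exact root_pos_of_nonneg R hvβr
    (f := fun γ => ∑ α ∈ R.simples, (rep R β α : ℝ) * (rep R (v α) γ : ℝ))
    (fun γ => Finset.sum_nonneg fun α _ => mul_nonneg (Nat.cast_nonneg _) (Nat.cast_nonneg _))
    hrepr

lemma card_step {I : Finset V} (hI : I ⊆ R.simples) {v : V ≃ₗᵢ[ℝ] V}
    (hv : ∀ γ ∈ R.roots, v γ ∈ R.roots) {α : V} (hα : α ∈ I) (hvα : v α ∉ R.pos) :
    (InvF R I (v * rf α)).card < (InvF R I v).card := by
  classical
  have hαr : α ∈ R.roots := simple_mem_roots R (hI hα)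
  have hαpos : α ∈ R.pos := R.simples_subset (hI hα)
  have hαne : α ≠ (0:V) := root_ne_zero R hαr
  have hαmem : α ∈ InvF R I v := by
    rw [mem_InvF, mem_PIfin]
    exact ⟨⟨hαpos, Submodule.subset_span (Finset.mem_coe.2 hα)⟩, hvα⟩
  have himg : Finset.image (fun β => rf α β) (InvF R I (v * rf α)) ⊆ (InvF R I v).erase α := by
    intro x hx
    rw [Finset.mem_image] at hx
    obtain ⟨β, hβ, rfl⟩ := hx
    rw [mem_InvF, mem_PIfin] at hβ
    obtain ⟨⟨hβpos, hβsp⟩, hβneg⟩ := hβ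
    have hβα : β ≠ α := by
      intro he
      apply hβneg
      rw [he]
      have h1 : (v * rf α) α = v (rf α α) := rfl
      rw [h1, rf_self α hαne, map_neg]
      have hvαr : v α ∈ R.roots := hv α hαr
      rcases R.mem_pos_or_neg_mem_pos _ hvαr with h | h
      · exact absurd h hvα
      · exact h
    have h2 : rf α β ∈ R.pos := rf_simple_pos R (hI hα) hβpos hβα
    have h3 : rf α β ∈ Submodule.span ℝ (I:Set V) := by
      rw [rf_apply]
      exact Submodule.sub_mem _ hβsp
        (Submodule.smul_mem _ _ (Submodule.subset_span (Finset.mem_coe.2 hα)))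
    rw [Finset.mem_erase]
    refine ⟨rf_simple_pos_ne R (hI hα) hβpos hβα, ?_⟩
    rw [mem_InvF, mem_PIfin]
    refine ⟨⟨h2, h3⟩, ?_⟩
    have h5 : v (rf α β) = (v * rf α) β := rfl
    rw [h5]
    exact hβneg
  calc (InvF R I (v * rf α)).card
      = (Finset.image (fun β => rf α β) (InvF R I (v * rf α))).card :=
        (Finset.card_image_of_injective _ (rf α).injective).symm
    _ ≤ ((InvF R I v).erase α).card := Finset.card_le_card himg
    _ < (InvF R I v).card := Finset.card_erase_lt_of_mem hαmem

lemma to_pos {I : Finset V} (hI : I ⊆ R.simples) :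
    ∀ k : ℕ, ∀ v : V ≃ₗᵢ[ℝ] V, (∀ γ ∈ R.roots, v γ ∈ R.roots) →
      (InvF R I v).card ≤ k →
      ∃ u ∈ reflectionSubgroup (I : Set V), ∀ β ∈ PIfin R I, (v * u) β ∈ R.pos := by
  intro k
  induction k with
  | zero =>
    intro v hv hcard
    refine ⟨1, Subgroup.one_mem _, ?_⟩
    intro β hβ
    by_contra hcont
    rw [mul_one] at hcont
    have hmem : β ∈ InvF R I v := (mem_InvF R).2 ⟨hβ, hcont⟩
    rw [Finset.card_eq_zero.1 (Nat.le_zero.1 hcard)] at hmem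
    simp at hmem
  | succ k ih =>
    intro v hv hcard
    rcases Finset.eq_empty_or_nonempty (InvF R I v) with he | ⟨β, hβ⟩
    · refine ⟨1, Subgroup.one_mem _, ?_⟩
      intro β hβ
      by_contra hcont
      rw [mul_one] at hcont
      have hmem : β ∈ InvF R I v := (mem_InvF R).2 ⟨hβ, hcont⟩
      rw [he] at hmem
      simp at hmem
    · rw [mem_InvF, mem_PIfin] at hβ
      obtain ⟨⟨hβpos, hβsp⟩, hβneg⟩ := hβ
      obtain ⟨α, hαI, hvα⟩ := step_lemma R hI hv hβpos hβsp hβneg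
      have hlt := card_step R hI hv hαI hvα
      have hv' : ∀ γ ∈ R.roots, (v * rf α) γ ∈ R.roots := by
        intro γ hγ
        have h1 : (v * rf α) γ = v (rf α γ) := rfl
        rw [h1]
        exact hv _ (rf_root R (simple_mem_roots R (hI hαI)) hγ)
      obtain ⟨u', hu', hgood⟩ := ih (v * rf α) hv' (by omega)
      refine ⟨rf α * u', Subgroup.mul_mem _
        (Subgroup.subset_closure (rf_mem_reflectionsOn (Finset.mem_coe.2 hαI))) hu', ?_⟩
      intro β' hβ'
      rw [← mul_assoc]
      exact hgood β' hβ'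

end RootAux


/-- `N(𝔞)` is the internal semidirect product `C(𝔞,I) ⋉ W_I`: `W_I ⊆ N(𝔞)` is
normal in `N(𝔞)`, `C(𝔞,I) ∩ W_I = {1}` and `N(𝔞) = C(𝔞,I) · W_I`. -/
theorem statement13 {V : Type} [NormedAddCommGroup V] [InnerProductSpace ℝ V]
    [FiniteDimensional ℝ V] (R : RootSystemData V)
    (I : Finset V) (hI : I ⊆ R.simples) :
    ((reflectionSubgroup (↑I : Set V) : Set (V ≃ₗᵢ[ℝ] V)) ⊆ normSet R I) ∧
    (∀ n ∈ normSet R I, ∀ u ∈ reflectionSubgroup (↑I : Set V),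
      n * u * n⁻¹ ∈ reflectionSubgroup (↑I : Set V)) ∧
    (compSet R I ∩ (reflectionSubgroup (↑I : Set V) : Set (V ≃ₗᵢ[ℝ] V)) = {1}) ∧
    (∀ n ∈ normSet R I, ∃ c ∈ compSet R I,
      ∃ u ∈ reflectionSubgroup (↑I : Set V), n = c * u) := by
  classical
  have part1 : (reflectionSubgroup (↑I : Set V) : Set (V ≃ₗᵢ[ℝ] V)) ⊆ normSet R I := by
    intro w hw
    exact reflectionSubgroup_le_norm R hI (SetLike.mem_coe.1 hw)
  refine ⟨part1, ?_, ?_, ?_⟩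
  · -- normality
    intro n hn u hu
    induction hu using Subgroup.closure_induction with
    | mem x hx =>
      obtain ⟨β, hβ, rfl⟩ := reflectionsOn_eq_rf hx
      have hβI : β ∈ I := Finset.mem_coe.1 hβ
      rw [rf_conj]
      have hnβr : n β ∈ R.roots := weyl_root R hn.1 (simple_mem_roots R (hI hβI))
      have hnβsp : n β ∈ Submodule.span ℝ (I : Set V) :=
        norm_maps_span hn.2 (Submodule.subset_span hβ)
      rcases R.mem_pos_or_neg_mem_pos _ hnβr with h | h
      · exact rf_mem_parabolic_aux R hI (ht R (n β)) (n β) h hnβsp le_rfl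
      · rw [← rf_neg (n β)]
        exact rf_mem_parabolic_aux R hI (ht R (-(n β))) (-(n β)) h
          (Submodule.neg_mem _ hnβsp) le_rfl
    | one =>
      rw [mul_one, mul_inv_cancel]
      exact Subgroup.one_mem _
    | mul x y hx hy ihx ihy =>
      have h : n * (x * y) * n⁻¹ = (n * x * n⁻¹) * (n * y * n⁻¹) := by group
      rw [h]
      exact Subgroup.mul_mem _ ihx ihy
    | inv x hx ihx =>
      have h : n * x⁻¹ * n⁻¹ = (n * x * n⁻¹)⁻¹ := by group
      rw [h]
      exact Subgroup.inv_mem _ ihx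
  · -- trivial intersection
    ext w
    simp only [Set.mem_inter_iff, Set.mem_singleton_iff, SetLike.mem_coe]
    constructor
    · rintro ⟨hwc, hwu⟩
      obtain ⟨L, hLmem, rfl⟩ := mem_reflectionSubgroup_list hwu
      apply no_inversion R hI L.length L le_rfl hLmem
      intro β hβ hsp
      have hβin : β ∈ R.posIn (↑I : Set V) := ⟨hβ, hsp⟩
      have hmem : PL L β ∈ R.posIn (↑I : Set V) := by
        rw [← hwc.2]
        exact ⟨β, hβin, rfl⟩
      exact hmem.1
    · rintro rfl
      have hid : ⇑(1 : V ≃ₗᵢ[ℝ] V) = id := rfl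
      refine ⟨⟨⟨R.weyl.one_mem, ?_⟩, ?_⟩, Subgroup.one_mem _⟩
      · rw [hid, Set.image_id]
      · rw [hid, Set.image_id]
  · -- decomposition
    intro n hn
    have hnroots : ∀ γ ∈ R.roots, n γ ∈ R.roots := fun γ hγ => weyl_root R hn.1 hγ
    obtain ⟨u, huW, hgood⟩ := to_pos R hI (InvF R I n).card n hnroots le_rfl
    have hcnorm : n * u ∈ normSet R I :=
      (normSubgroup R I).mul_mem hn (reflectionSubgroup_le_norm R hI huW)
    have hmapsp : ∀ x ∈ Submodule.span ℝ (↑I : Set V),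
        (n * u) x ∈ Submodule.span ℝ (↑I : Set V) :=
      fun x hx => norm_maps_span hcnorm.2 hx
    have hsub : Finset.image (fun β => (n * u) β) (PIfin R I) ⊆ PIfin R I := by
      intro x hx
      rw [Finset.mem_image] at hx
      obtain ⟨β, hβ, rfl⟩ := hx
      rw [mem_PIfin]
      exact ⟨hgood β hβ, hmapsp β ((mem_PIfin R).1 hβ).2⟩
    have himg : Finset.image (fun β => (n * u) β) (PIfin R I) = PIfin R I := by
      apply Finset.eq_of_subset_of_card_le hsub
      rw [Finset.card_image_of_injective _ (n * u).injective]
    have hcomp : n * u ∈ compSet R I := by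
      refine ⟨hcnorm, ?_⟩
      have hset : R.posIn (↑I : Set V) = ↑(PIfin R I) := by
        ext x
        rw [Finset.mem_coe, mem_PIfin]
        exact Iff.rfl
      rw [hset, ← Finset.coe_image, himg]
    refine ⟨n * u, hcomp, u⁻¹, Subgroup.inv_mem _ huW, ?_⟩
    rw [mul_assoc, mul_inv_cancel, mul_one]
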